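/- Let C be a bivariate copula (joint distribution function of (U_1, U_2) with U(0,1) margins) whose lower tail copula Λ(x, y; C) = lim_{p→0+} C(px, py)/p exists for all x, y ≥ 0 and whose maximal tail concordance measure sup_{b>0} Λ(b, 1/b; C) is attained at a unique b* ∈ (0,∞). Suppose C is tail independent in the upper-left, upper, and lower-right tails, i.e., for all x, y > 0: lim_{p→0+} (py − C(1 − px, py))/p = 0, lim_{p→0+} (1 − (1 − px) − (1 − py) + C(1 − px, 1 − py))/p = 0, and lim_{p→0+} (px − C(px, 1 − py))/p = 0. For j = 1, 2 let 𝒱*_j = 1 − 𝒱_j be a flipped v-transform, where 𝒱_j is a v-transform with change point δ_j, and suppose α_j = (𝒱*_{j|1})^{−1}ʹ(0+) = (𝒱_{j|1}^{−1})ʹ(1−) exists, α_j ∈ [0,1]. Let C_{𝒱*} be the joint distribution function of (𝒱*_1(U_1), 𝒱*_2(U_2)). Then Λ(b, 1/b; C_{𝒱*}) = Λ(α_1 b, α_2/b; C) for all b > 0, and if α_1, α_2 > 0, the maximal tail concordance measure of C_{𝒱*} is attained at b*_{C_{𝒱*}} = √(α_2/α_1) · b* with value Λ(b*_{C_{𝒱*}},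 1/b*_{C_{𝒱*}}; C_{𝒱*}) = √(α_1 α_2) · Λ(b*, 1/b*; C). -/

import Mathlib

open MeasureTheory Set Filter

/-- The uniform distribution `U(0,1)`. -/
noncomputable def unif01 : Measure ℝ := volume.restrict (Set.Ioc (0 : ℝ) 1)

lemma unif01_apply (s : Set ℝ) (hs : MeasurableSet s) :
    unif01 s = volume (s ∩ Set.Ioc (0:ℝ) 1) := Measure.restrict_apply hs

lemma unif01_Iic (t : ℝ) : unif01 (Iic t) = ENNReal.ofReal (min t 1) := by
  rw [unif01_apply _ measurableSet_Iic]
  have : Iic t ∩ Ioc (0:ℝ) 1 = Ioc 0 (min t 1) := by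
    ext x; simp only [mem_inter_iff, mem_Iic, mem_Ioc, le_min_iff]
    tauto
  rw [this, Real.volume_Ioc, sub_zero]

lemma unif01_Ici (c : ℝ) : unif01 (Ici c) = ENNReal.ofReal (1 - max c 0) := by
  rw [unif01_apply _ measurableSet_Ici]
  rcases le_or_gt c 0 with h | h
  · have h1 : Ici c ∩ Ioc (0:ℝ) 1 = Ioc 0 1 := by
      ext x; simp only [mem_inter_iff, mem_Ici, mem_Ioc]
      exact ⟨fun h2 => h2.2, fun h2 => ⟨le_trans h h2.1.le, h2⟩⟩
    rw [h1, Real.volume_Ioc, max_eq_right h]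
  · have h1 : Ici c ∩ Ioc (0:ℝ) 1 = Icc c 1 := by
      ext x; simp only [mem_inter_iff, mem_Ici, mem_Ioc, mem_Icc]
      exact ⟨fun h2 => ⟨h2.1, h2.2.2⟩, fun h2 => ⟨h2.1, lt_of_lt_of_le h h2.1, h2.2⟩⟩
    rw [h1, Real.volume_Icc, max_eq_left h.le]

lemma unif01_singleton (c : ℝ) : unif01 {c} = 0 := by
  rw [unif01_apply _ (measurableSet_singleton c)]
  exact le_antisymm (le_trans (measure_mono (inter_subset_left)) (by simp)) zero_le

lemma unif01_Ioc_le (x y : ℝ) : unif01 (Ioc x y) ≤ ENNReal.ofReal (y - x) := by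
  rw [unif01_apply _ measurableSet_Ioc]
  calc volume (Ioc x y ∩ Ioc (0:ℝ) 1) ≤ volume (Ioc x y) := measure_mono inter_subset_left
  _ = ENNReal.ofReal (y - x) := Real.volume_Ioc

lemma aux_tendsto_mul (c : ℝ) (hc : 0 < c) :
    Tendsto (fun p : ℝ => p * c) (nhdsWithin 0 (Set.Ioi 0)) (nhdsWithin 0 (Set.Ioi 0)) := by
  have h1 : Tendsto (fun p : ℝ => p * c) (nhdsWithin 0 (Set.Ioi 0)) (nhds 0) := by
    have h := ((continuous_id.mul (continuous_const (y := c))).tendsto (0 : ℝ)).mono_left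
      (nhdsWithin_le_nhds (s := Set.Ioi (0:ℝ)))
    simpa [Pi.mul_def] using h
  refine tendsto_nhdsWithin_of_tendsto_nhds_of_eventually_within _ h1 ?_
  filter_upwards [self_mem_nhdsWithin] with p hp
  exact mul_pos hp hc

lemma aux_slope {f : ℝ → ℝ} {a : ℝ} (hf : HasDerivWithinAt f a (Set.Ioi 0) 0)
    (h0 : f 0 = 0) : Tendsto (fun v => f v / v) (nhdsWithin 0 (Set.Ioi 0)) (nhds a) := by
  rw [hasDerivWithinAt_iff_tendsto_slope] at hf
  have hs : (Set.Ioi (0:ℝ)) \ {0} = Set.Ioi 0 := diff_singleton_eq_self (by simp)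
  rw [hs] at hf
  refine hf.congr fun v => ?_
  rw [slope_def_field, h0, sub_zero, sub_zero]

lemma aux_hom {C L : ℝ → ℝ → ℝ}
    (hΛ : ∀ x y : ℝ, 0 ≤ x → 0 ≤ y →
      Tendsto (fun p => C (p * x) (p * y) / p) (nhdsWithin 0 (Set.Ioi 0)) (nhds (L x y)))
    {c x y : ℝ} (hc : 0 < c) (hx : 0 ≤ x) (hy : 0 ≤ y) :
    L (c*x) (c*y) = c * L x y := by
  have h1 := hΛ (c*x) (c*y) (by positivity) (by positivity)
  have h2 : Tendsto (fun p => C (p*(c*x)) (p*(c*y)) / p) (nhdsWithin 0 (Set.Ioi 0))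
      (nhds (c * L x y)) := by
    have h3 := ((hΛ x y hx hy).comp (aux_tendsto_mul c hc)).const_mul c
    refine h3.congr' ?_
    filter_upwards [self_mem_nhdsWithin] with p (hp : 0 < p)
    show c * (C (p*c*x) (p*c*y) / (p*c)) = _
    rw [mul_assoc p c x, mul_assoc p c y]
    field_simp
  exact tendsto_nhds_unique h1 h2
/-- maximal tail concordance measure of flipped v-transformed
copulas: `Λ(b, 1/b; C_{𝒱*}) = Λ(α₁ b, α₂/b; C)` for all `b > 0`, and if
`α₁, α₂ > 0`, the MTCM of `C_{𝒱*}` is attained at `b* √(α₂/α₁)` with value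
`√(α₁α₂) Λ(b*, 1/b*; C)`. -/
theorem mtcm_of_flipped_v_transformed_copula
    {Ω : Type*} [MeasurableSpace Ω] (P : Measure Ω) [IsProbabilityMeasure P]
    -- `(U₁, U₂) ∼ C` with `U(0,1)` margins
    (U : Fin 2 → Ω → ℝ) (hU : ∀ j, Measurable (U j))
    (hUlaw : ∀ j, P.map (U j) = unif01)
    -- the copula `C`
    (C : ℝ → ℝ → ℝ)
    (hC : ∀ x y : ℝ, C x y = (P {ω | U 0 ω ≤ x ∧ U 1 ω ≤ y}).toReal)
    -- the lower tail copula `Λ(x, y; C)` exists for all `x, y ≥ 0`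
    (Λ : ℝ → ℝ → ℝ)
    (hΛ : ∀ x y : ℝ, 0 ≤ x → 0 ≤ y →
      Tendsto (fun p => C (p * x) (p * y) / p) (nhdsWithin 0 (Set.Ioi 0))
        (nhds (Λ x y)))
    -- the MTCM of `C` is attained at a unique `b* ∈ (0, ∞)`
    (bstar : ℝ) (hbstar : 0 < bstar)
    (hmax : ∀ b : ℝ, 0 < b → Λ b (1 / b) ≤ Λ bstar (1 / bstar))
    (huniq : ∀ b : ℝ, 0 < b → Λ b (1 / b) = Λ bstar (1 / bstar) → b = bstar)
    -- `C` is tail independent in the upper-left, upper and lower-right tails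
    (hUL : ∀ x y : ℝ, 0 < x → 0 < y →
      Tendsto (fun p => (p * y - C (1 - p * x) (p * y)) / p)
        (nhdsWithin 0 (Set.Ioi 0)) (nhds 0))
    (hUU : ∀ x y : ℝ, 0 < x → 0 < y →
      Tendsto (fun p =>
          (1 - (1 - p * x) - (1 - p * y) + C (1 - p * x) (1 - p * y)) / p)
        (nhdsWithin 0 (Set.Ioi 0)) (nhds 0))
    (hLR : ∀ x y : ℝ, 0 < x → 0 < y →
      Tendsto (fun p => (p * x - C (p * x) (1 - p * y)) / p)
        (nhdsWithin 0 (Set.Ioi 0)) (nhds 0))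
    -- the v-transforms `𝒱_j` with fulcra `δ_j`
    (V : Fin 2 → ℝ → ℝ) (δ : Fin 2 → ℝ) (hδ : ∀ j, δ j ∈ Set.Ioo (0 : ℝ) 1)
    (hVmeas : ∀ j, Measurable (V j))
    (hVunif : ∀ j, Measure.map (V j) unif01 = unif01)
    (hVcont : ∀ j, ContinuousOn (V j) (Set.Icc 0 1))
    (hVanti : ∀ j, StrictAntiOn (V j) (Set.Icc 0 (δ j)))
    (hVmono : ∀ j, StrictMonoOn (V j) (Set.Icc (δ j) 1))
    (hV0 : ∀ j, V j 0 = 1) (hVδ : ∀ j, V j (δ j) = 0) (hV1 : ∀ j, V j 1 = 1)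
    -- the inverse `𝒱_{j|1}^{-1}` of the decreasing branch
    (Vinv : Fin 2 → ℝ → ℝ)
    (hVinv : ∀ j, ∀ v ∈ Set.Icc (0 : ℝ) 1,
      Vinv j v ∈ Set.Icc 0 (δ j) ∧ V j (Vinv j v) = v)
    -- `α_j = ((𝒱*_{j|1})^{-1})'(0+)`, where `(𝒱*_{j|1})^{-1}(v) = 𝒱_{j|1}^{-1}(1 - v)`
    (α : Fin 2 → ℝ) (hα01 : ∀ j, α j ∈ Set.Icc (0 : ℝ) 1)
    (hα : ∀ j, HasDerivWithinAt (fun v => Vinv j (1 - v)) (α j) (Set.Ioi 0) 0)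
    -- the flipped v-transformed copula `C_{𝒱*}`, `𝒱*_j = 1 - 𝒱_j`
    (Cs : ℝ → ℝ → ℝ)
    (hCs : ∀ x y : ℝ,
      Cs x y = (P {ω | 1 - V 0 (U 0 ω) ≤ x ∧ 1 - V 1 (U 1 ω) ≤ y}).toReal) :
    -- the tail copula of `C_{𝒱*}`
    (∀ b : ℝ, 0 < b →
      Tendsto (fun p => Cs (p * b) (p * (1 / b)) / p) (nhdsWithin 0 (Set.Ioi 0))
        (nhds (Λ (α 0 * b) (α 1 * (1 / b))))) ∧
    -- the MTCM of `C_{𝒱*}` when `α₁, α₂ > 0`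
    (0 < α 0 → 0 < α 1 →
      (∀ b : ℝ, 0 < b →
        Λ (α 0 * b) (α 1 * (1 / b))
          ≤ Λ (α 0 * (Real.sqrt (α 1 / α 0) * bstar))
              (α 1 * (1 / (Real.sqrt (α 1 / α 0) * bstar)))) ∧
      Λ (α 0 * (Real.sqrt (α 1 / α 0) * bstar))
          (α 1 * (1 / (Real.sqrt (α 1 / α 0) * bstar)))
        = Real.sqrt (α 0 * α 1) * Λ bstar (1 / bstar)) := by
  constructor
  · intro b hb
    have hbinv : 0 < 1 / b := by positivity
    have hVU : ∀ j, Measurable fun ω => V j (U j ω) := fun j => (hVmeas j).comp (hU j)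
    have hVUlaw : ∀ j, P.map (fun ω => V j (U j ω)) = unif01 := by
      intro j
      rw [show (fun ω => V j (U j ω)) = (V j) ∘ (U j) from rfl,
        ← Measure.map_map (hVmeas j) (hU j), hUlaw j, hVunif j]
    have hPU : ∀ j (s : Set ℝ), MeasurableSet s → P ((U j) ⁻¹' s) = unif01 s := by
      intro j s hs; rw [← hUlaw j, Measure.map_apply (hU j) hs]
    have hPVU : ∀ j (s : Set ℝ), MeasurableSet s →
        P ((fun ω => V j (U j ω)) ⁻¹' s) = unif01 s := by
      intro j s hs; rw [← hVUlaw j, Measure.map_apply (hVU j) hs]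
    have Prmono : ∀ {S T : Set Ω}, S ⊆ T → (P S).toReal ≤ (P T).toReal :=
      fun h => ENNReal.toReal_mono (measure_ne_top P _) (measure_mono h)
    have Pradd : ∀ {S T : Set Ω}, MeasurableSet T → Disjoint S T →
        (P (S ∪ T)).toReal = (P S).toReal + (P T).toReal := by
      intro S T hT hd
      rw [measure_union hd hT, ENNReal.toReal_add (measure_ne_top P _) (measure_ne_top P _)]
    have Prsub : ∀ {S T : Set Ω}, (P (S ∪ T)).toReal ≤ (P S).toReal + (P T).toReal := by
      intro S T
      refine le_trans (ENNReal.toReal_mono ?_ (measure_union_le S T)) ?_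
      · exact ENNReal.add_ne_top.2 ⟨measure_ne_top P _, measure_ne_top P _⟩
      · rw [ENNReal.toReal_add (measure_ne_top P _) (measure_ne_top P _)]
    have matom : ∀ j (c : ℝ), P ((U j) ⁻¹' {c}) = 0 := by
      intro j c; rw [hPU j _ (measurableSet_singleton c), unif01_singleton]
    have m1' : ∀ j (t : ℝ), 0 ≤ t → t ≤ 1 → (P ((U j) ⁻¹' (Iic t))).toReal = t := by
      intro j t h0 h1
      rw [hPU j _ measurableSet_Iic, unif01_Iic, min_eq_left h1, ENNReal.toReal_ofReal h0]
    have m1 : ∀ j (t : ℝ), 0 ≤ t → (P ((U j) ⁻¹' (Iic t))).toReal ≤ t := by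
      intro j t h0
      rw [hPU j _ measurableSet_Iic, unif01_Iic]
      rcases le_or_gt (min t 1) 0 with h | h
      · rw [ENNReal.ofReal_eq_zero.2 h]; simpa using h0
      · rw [ENNReal.toReal_ofReal h.le]; exact min_le_left _ _
    have mlt : ∀ j (c : ℝ), 0 ≤ c → c ≤ 1 → c ≤ (P ((U j) ⁻¹' (Iio c))).toReal := by
      intro j c h0 h1
      have hsub : (U j) ⁻¹' (Iic c) ⊆ (U j) ⁻¹' (Iio c) ∪ (U j) ⁻¹' {c} := by
        intro ω hω
        rcases lt_or_eq_of_le (show U j ω ≤ c from hω) with h | h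
        · exact Or.inl h
        · exact Or.inr h
      calc c = (P ((U j) ⁻¹' (Iic c))).toReal := (m1' j c h0 h1).symm
      _ ≤ (P ((U j) ⁻¹' (Iio c) ∪ (U j) ⁻¹' {c})).toReal := Prmono hsub
      _ ≤ (P ((U j) ⁻¹' (Iio c))).toReal + (P ((U j) ⁻¹' {c})).toReal := Prsub
      _ = (P ((U j) ⁻¹' (Iio c))).toReal := by rw [matom j c]; simp
    have mIci : ∀ j (c : ℝ), 0 ≤ c → c ≤ 1 → (P ((U j) ⁻¹' (Ici c))).toReal = 1 - c := by
      intro j c h0 h1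
      rw [hPU j _ measurableSet_Ici, unif01_Ici, max_eq_left h0,
        ENNReal.toReal_ofReal (by linarith)]
    have mA : ∀ j (t : ℝ), 0 ≤ t → t ≤ 1 →
        (P ((fun ω => V j (U j ω)) ⁻¹' (Ici (1 - t)))).toReal = t := by
      intro j t h0 h1
      rw [hPVU j _ measurableSet_Ici, unif01_Ici, max_eq_left (by linarith),
        show (1 : ℝ) - (1 - t) = t by ring, ENNReal.toReal_ofReal h0]
    have hC2 : ∀ x y : ℝ, C x y = (P ((U 0) ⁻¹' (Iic x) ∩ (U 1) ⁻¹' (Iic y))).toReal := by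
      intro x y; rw [hC]; rfl
    have hCs2 : ∀ x y : ℝ, Cs x y = (P ((fun ω => V 0 (U 0 ω)) ⁻¹' (Ici (1 - x)) ∩
        (fun ω => V 1 (U 1 ω)) ⁻¹' (Ici (1 - y)))).toReal := by
      intro x y; rw [hCs]
      have hset : {ω | 1 - V 0 (U 0 ω) ≤ x ∧ 1 - V 1 (U 1 ω) ≤ y} =
          (fun ω => V 0 (U 0 ω)) ⁻¹' (Ici (1 - x)) ∩ (fun ω => V 1 (U 1 ω)) ⁻¹' (Ici (1 - y)) := by
        ext ω
        simp only [mem_setOf_eq, mem_inter_iff, mem_preimage, mem_Ici]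
        constructor <;> intro h <;> exact ⟨by linarith [h.1], by linarith [h.2]⟩
      rw [hset]
    set G : Set Ω := (U 0) ⁻¹' (Ioc 0 1) ∩ (U 1) ⁻¹' (Ioc 0 1) with hGdef
    have hGc : P Gᶜ = 0 := by
      have h1 : ∀ j, P ((U j) ⁻¹' (Ioc 0 1))ᶜ = 0 := by
        intro j
        rw [← Set.preimage_compl, hPU j _ measurableSet_Ioc.compl,
          unif01_apply _ measurableSet_Ioc.compl, Set.compl_inter_self]
        simp
      rw [hGdef, Set.compl_inter]
      exact le_antisymm (le_trans (measure_union_le _ _) (by rw [h1 0, h1 1]; simp))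
        zero_le
    have hPG : ∀ S : Set Ω, P (S ∩ G) = P S := fun S => measure_inter_conull hGc
    have hVinv1 : ∀ j, Vinv j 1 = 0 := by
      intro j
      obtain ⟨⟨hv0, hvδ⟩, hvV⟩ := hVinv j 1 ⟨zero_le_one, le_refl 1⟩
      by_contra hne
      have hpos : 0 < Vinv j 1 := lt_of_le_of_ne hv0 (Ne.symm hne)
      have h2 := hVanti j ⟨le_refl 0, (hδ j).1.le⟩ ⟨hv0, hvδ⟩ hpos
      rw [hV0 j, hvV] at h2
      exact lt_irrefl 1 h2
    have hacoef : ∀ j (k : ℝ), 0 < k →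
        Tendsto (fun p => Vinv j (1 - p * k) / p) (nhdsWithin 0 (Set.Ioi 0))
          (nhds (α j * k)) := by
      intro j k hk
      have hs := aux_slope (hα j) (by simpa using hVinv1 j)
      have h2 := (hs.comp (aux_tendsto_mul k hk)).const_mul k
      rw [mul_comm k (α j)] at h2
      refine h2.congr' ?_
      filter_upwards [self_mem_nhdsWithin] with p (hp : 0 < p)
      show k * (Vinv j (1 - p * k) / (p * k)) = _
      field_simp
    have hw : ∀ j (t : ℝ), 0 < t → t < 1 → ∃ w, δ j < w ∧ w ≤ 1 ∧ V j w = 1 - t := by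
      intro j t h0 h1
      have hcont : ContinuousOn (V j) (Icc (δ j) 1) :=
        (hVcont j).mono (Icc_subset_Icc (hδ j).1.le le_rfl)
      have hmem : (1 - t) ∈ Icc (V j (δ j)) (V j 1) := by
        rw [hVδ j, hV1 j]; exact ⟨by linarith, by linarith⟩
      obtain ⟨w, hwmem, hwv⟩ := intermediate_value_Icc (hδ j).2.le hcont hmem
      refine ⟨w, ?_, hwmem.2, hwv⟩
      rcases lt_or_eq_of_le hwmem.1 with h | h
      · exact h
      · exfalso; rw [← h, hVδ j] at hwv; linarith
    have eL : ∀ j (t : ℝ) (ω : Ω), 0 < t → t ≤ 1 → 0 < U j ω → U j ω ≤ Vinv j (1 - t) →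
        1 - t ≤ V j (U j ω) := by
      intro j t ω ht0 ht1 hU0 hUa
      obtain ⟨⟨ha0, haδ⟩, hVa⟩ := hVinv j (1 - t) ⟨by linarith, by linarith⟩
      rcases lt_or_eq_of_le hUa with h | h
      · have h2 := hVanti j ⟨hU0.le, le_trans hUa haδ⟩ ⟨ha0, haδ⟩ h
        rw [hVa] at h2; exact h2.le
      · rw [h, hVa]
    have eR : ∀ j (t w : ℝ) (ω : Ω), 0 < t → t ≤ 1 → δ j < w → w ≤ 1 → V j w = 1 - t →
        0 < U j ω → U j ω ≤ 1 → 1 - t ≤ V j (U j ω) → Vinv j (1 - t) < U j ω →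
        w ≤ U j ω := by
      intro j t w ω ht0 ht1 hwδ hw1 hwV hU0 hU1 hAω haU
      obtain ⟨⟨ha0, haδ⟩, hVa⟩ := hVinv j (1 - t) ⟨by linarith, by linarith⟩
      by_contra hlt
      push_neg at hlt
      rcases le_or_gt (U j ω) (δ j) with hcase | hcase
      · have h2 := hVanti j ⟨ha0, haδ⟩ ⟨hU0.le, hcase⟩ haU
        rw [hVa] at h2; linarith
      · have h2 := hVmono j ⟨hcase.le, hU1⟩ ⟨hwδ.le, hw1⟩ hlt
        rw [hwV] at h2; linarith
    have eW : ∀ j (t w : ℝ) (ω : Ω), δ j < w → w ≤ 1 → V j w = 1 - t → U j ω ≤ 1 →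
        w ≤ U j ω → 1 - t ≤ V j (U j ω) := by
      intro j t w ω hwδ hw1 hwV hU1 hwU
      rcases lt_or_eq_of_le hwU with h | h
      · have h2 := hVmono j ⟨hwδ.le, hw1⟩ ⟨le_trans hwδ.le hwU, hU1⟩ h
        rw [hwV] at h2; exact h2.le
      · rw [← h, hwV]
    -- corner bounds
    have g1 : ∀ s c : ℝ, 0 ≤ s →
        (P ((U 0) ⁻¹' (Iic s) ∩ (U 1) ⁻¹' (Ici c))).toReal ≤ s - C s c := by
      intro s c hs
      have hd : Disjoint ((U 0) ⁻¹' (Iic s) ∩ (U 1) ⁻¹' (Iio c))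
          ((U 0) ⁻¹' (Iic s) ∩ (U 1) ⁻¹' (Ici c)) := by
        rw [Set.disjoint_left]
        rintro ω ⟨-, h1⟩ ⟨-, h2⟩
        exact absurd (show c ≤ U 1 ω from h2) (not_le.2 h1)
      have hun : (U 0) ⁻¹' (Iic s) =
          ((U 0) ⁻¹' (Iic s) ∩ (U 1) ⁻¹' (Iio c)) ∪
          ((U 0) ⁻¹' (Iic s) ∩ (U 1) ⁻¹' (Ici c)) := by
        rw [← Set.inter_union_distrib_left, ← Set.preimage_union, Set.Iio_union_Ici,
          Set.preimage_univ, Set.inter_univ]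
      have key : (P ((U 0) ⁻¹' (Iic s))).toReal =
          (P ((U 0) ⁻¹' (Iic s) ∩ (U 1) ⁻¹' (Iio c))).toReal +
          (P ((U 0) ⁻¹' (Iic s) ∩ (U 1) ⁻¹' (Ici c))).toReal := by
        conv_lhs => rw [hun]
        exact Pradd (((hU 0) measurableSet_Iic).inter ((hU 1) measurableSet_Ici)) hd
      have hCle : C s c ≤ (P ((U 0) ⁻¹' (Iic s) ∩ (U 1) ⁻¹' (Iio c))).toReal := by
        rw [hC2]
        have hsub : (U 0) ⁻¹' (Iic s) ∩ (U 1) ⁻¹' (Iic c) ⊆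
            ((U 0) ⁻¹' (Iic s) ∩ (U 1) ⁻¹' (Iio c)) ∪ (U 1) ⁻¹' {c} := by
          rintro ω ⟨h1, h2⟩
          rcases lt_or_eq_of_le (show U 1 ω ≤ c from h2) with h | h
          · exact Or.inl ⟨h1, h⟩
          · exact Or.inr h
        calc (P ((U 0) ⁻¹' (Iic s) ∩ (U 1) ⁻¹' (Iic c))).toReal
            ≤ (P (((U 0) ⁻¹' (Iic s) ∩ (U 1) ⁻¹' (Iio c)) ∪ (U 1) ⁻¹' {c})).toReal :=
              Prmono hsub
        _ ≤ (P ((U 0) ⁻¹' (Iic s) ∩ (U 1) ⁻¹' (Iio c))).toReal +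
              (P ((U 1) ⁻¹' {c})).toReal := Prsub
        _ = (P ((U 0) ⁻¹' (Iic s) ∩ (U 1) ⁻¹' (Iio c))).toReal := by rw [matom 1 c]; simp
      have hm := m1 0 s hs
      linarith
    have g2 : ∀ c t : ℝ, 0 ≤ t →
        (P ((U 0) ⁻¹' (Ici c) ∩ (U 1) ⁻¹' (Iic t))).toReal ≤ t - C c t := by
      intro c t ht
      have hd : Disjoint ((U 0) ⁻¹' (Iio c) ∩ (U 1) ⁻¹' (Iic t))
          ((U 0) ⁻¹' (Ici c) ∩ (U 1) ⁻¹' (Iic t)) := by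
        rw [Set.disjoint_left]
        rintro ω ⟨h1, -⟩ ⟨h2, -⟩
        exact absurd (show c ≤ U 0 ω from h2) (not_le.2 h1)
      have hun : (U 1) ⁻¹' (Iic t) =
          ((U 0) ⁻¹' (Iio c) ∩ (U 1) ⁻¹' (Iic t)) ∪
          ((U 0) ⁻¹' (Ici c) ∩ (U 1) ⁻¹' (Iic t)) := by
        rw [← Set.union_inter_distrib_right, ← Set.preimage_union, Set.Iio_union_Ici,
          Set.preimage_univ, Set.univ_inter]
      have key : (P ((U 1) ⁻¹' (Iic t))).toReal =
          (P ((U 0) ⁻¹' (Iio c) ∩ (U 1) ⁻¹' (Iic t))).toReal +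
          (P ((U 0) ⁻¹' (Ici c) ∩ (U 1) ⁻¹' (Iic t))).toReal := by
        conv_lhs => rw [hun]
        exact Pradd (((hU 0) measurableSet_Ici).inter ((hU 1) measurableSet_Iic)) hd
      have hCle : C c t ≤ (P ((U 0) ⁻¹' (Iio c) ∩ (U 1) ⁻¹' (Iic t))).toReal := by
        rw [hC2]
        have hsub : (U 0) ⁻¹' (Iic c) ∩ (U 1) ⁻¹' (Iic t) ⊆
            ((U 0) ⁻¹' (Iio c) ∩ (U 1) ⁻¹' (Iic t)) ∪ (U 0) ⁻¹' {c} := by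
          rintro ω ⟨h1, h2⟩
          rcases lt_or_eq_of_le (show U 0 ω ≤ c from h1) with h | h
          · exact Or.inl ⟨h, h2⟩
          · exact Or.inr h
        calc (P ((U 0) ⁻¹' (Iic c) ∩ (U 1) ⁻¹' (Iic t))).toReal
            ≤ (P (((U 0) ⁻¹' (Iio c) ∩ (U 1) ⁻¹' (Iic t)) ∪ (U 0) ⁻¹' {c})).toReal :=
              Prmono hsub
        _ ≤ (P ((U 0) ⁻¹' (Iio c) ∩ (U 1) ⁻¹' (Iic t))).toReal +
              (P ((U 0) ⁻¹' {c})).toReal := Prsub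
        _ = (P ((U 0) ⁻¹' (Iio c) ∩ (U 1) ⁻¹' (Iic t))).toReal := by rw [matom 0 c]; simp
      have hm := m1 1 t ht
      linarith
    have g3 : ∀ c₀ c₁ : ℝ, 0 ≤ c₀ → c₀ ≤ 1 → 0 ≤ c₁ → c₁ ≤ 1 →
        (P ((U 0) ⁻¹' (Ici c₀) ∩ (U 1) ⁻¹' (Ici c₁))).toReal
          ≤ 1 - c₀ - c₁ + C c₀ c₁ := by
      intro c₀ c₁ h00 h01 h10 h11
      have key1 : (P ((U 0) ⁻¹' (Ici c₀))).toReal =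
          (P ((U 0) ⁻¹' (Ici c₀) ∩ (U 1) ⁻¹' (Iio c₁))).toReal +
          (P ((U 0) ⁻¹' (Ici c₀) ∩ (U 1) ⁻¹' (Ici c₁))).toReal := by
        have hun : (U 0) ⁻¹' (Ici c₀) =
            ((U 0) ⁻¹' (Ici c₀) ∩ (U 1) ⁻¹' (Iio c₁)) ∪
            ((U 0) ⁻¹' (Ici c₀) ∩ (U 1) ⁻¹' (Ici c₁)) := by
          rw [← Set.inter_union_distrib_left, ← Set.preimage_union, Set.Iio_union_Ici,
            Set.preimage_univ, Set.inter_univ]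
        conv_lhs => rw [hun]
        refine Pradd (((hU 0) measurableSet_Ici).inter ((hU 1) measurableSet_Ici)) ?_
        rw [Set.disjoint_left]
        rintro ω ⟨-, h1⟩ ⟨-, h2⟩
        exact absurd (show c₁ ≤ U 1 ω from h2) (not_le.2 h1)
      have key2 : (P ((U 1) ⁻¹' (Iio c₁))).toReal =
          (P ((U 0) ⁻¹' (Iio c₀) ∩ (U 1) ⁻¹' (Iio c₁))).toReal +
          (P ((U 0) ⁻¹' (Ici c₀) ∩ (U 1) ⁻¹' (Iio c₁))).toReal := by
        have hun : (U 1) ⁻¹' (Iio c₁) =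
            ((U 0) ⁻¹' (Iio c₀) ∩ (U 1) ⁻¹' (Iio c₁)) ∪
            ((U 0) ⁻¹' (Ici c₀) ∩ (U 1) ⁻¹' (Iio c₁)) := by
          rw [← Set.union_inter_distrib_right, ← Set.preimage_union, Set.Iio_union_Ici,
            Set.preimage_univ, Set.univ_inter]
        conv_lhs => rw [hun]
        refine Pradd (((hU 0) measurableSet_Ici).inter ((hU 1) measurableSet_Iio)) ?_
        rw [Set.disjoint_left]
        rintro ω ⟨h1, -⟩ ⟨h2, -⟩
        exact absurd (show c₀ ≤ U 0 ω from h2) (not_le.2 h1)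
      have hIci0 := mIci 0 c₀ h00 h01
      have hIio1 := mlt 1 c₁ h10 h11
      have hCC : (P ((U 0) ⁻¹' (Iio c₀) ∩ (U 1) ⁻¹' (Iio c₁))).toReal ≤ C c₀ c₁ := by
        rw [hC2]
        exact Prmono (Set.inter_subset_inter (Set.preimage_mono Iio_subset_Iic_self)
          (Set.preimage_mono Iio_subset_Iic_self))
      linarith
    -- Lipschitz continuity of C
    have lipa : ∀ x x' y : ℝ, |C x y - C x' y| ≤ |x - x'| := by
      have base : ∀ x x' y : ℝ, x ≤ x' → C x y ≤ C x' y ∧ C x' y ≤ C x y + (x' - x) := by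
        intro x x' y hxx
        constructor
        · rw [hC2, hC2]
          exact Prmono (Set.inter_subset_inter_left _ (Set.preimage_mono (Iic_subset_Iic.2 hxx)))
        · rw [hC2, hC2]
          have hsub : (U 0) ⁻¹' (Iic x') ∩ (U 1) ⁻¹' (Iic y) ⊆
              ((U 0) ⁻¹' (Iic x) ∩ (U 1) ⁻¹' (Iic y)) ∪ (U 0) ⁻¹' (Ioc x x') := by
            rintro ω ⟨h1, h2⟩
            rcases le_or_gt (U 0 ω) x with h | h
            · exact Or.inl ⟨h, h2⟩
            · exact Or.inr ⟨h, h1⟩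
          have hIoc : (P ((U 0) ⁻¹' (Ioc x x'))).toReal ≤ x' - x := by
            rw [hPU 0 _ measurableSet_Ioc]
            refine le_trans (ENNReal.toReal_mono ENNReal.ofReal_ne_top (unif01_Ioc_le x x')) ?_
            rw [ENNReal.toReal_ofReal (by linarith)]
          calc (P ((U 0) ⁻¹' (Iic x') ∩ (U 1) ⁻¹' (Iic y))).toReal
              ≤ (P (((U 0) ⁻¹' (Iic x) ∩ (U 1) ⁻¹' (Iic y)) ∪ (U 0) ⁻¹' (Ioc x x'))).toReal :=
                Prmono hsub
          _ ≤ (P ((U 0) ⁻¹' (Iic x) ∩ (U 1) ⁻¹' (Iic y))).toReal +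
                (P ((U 0) ⁻¹' (Ioc x x'))).toReal := Prsub
          _ ≤ (P ((U 0) ⁻¹' (Iic x) ∩ (U 1) ⁻¹' (Iic y))).toReal + (x' - x) := by linarith
      intro x x' y
      rcases le_total x x' with h | h
      · obtain ⟨ha, hb⟩ := base x x' y h
        rw [abs_of_nonpos (by linarith), abs_of_nonpos (by linarith)]
        linarith
      · obtain ⟨ha, hb⟩ := base x' x y h
        rw [abs_of_nonneg (by linarith), abs_of_nonneg (by linarith)]
        linarith
    have lipb : ∀ x y y' : ℝ, |C x y - C x y'| ≤ |y - y'| := by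
      have base : ∀ x y y' : ℝ, y ≤ y' → C x y ≤ C x y' ∧ C x y' ≤ C x y + (y' - y) := by
        intro x y y' hyy
        constructor
        · rw [hC2, hC2]
          exact Prmono (Set.inter_subset_inter_right _ (Set.preimage_mono (Iic_subset_Iic.2 hyy)))
        · rw [hC2, hC2]
          have hsub : (U 0) ⁻¹' (Iic x) ∩ (U 1) ⁻¹' (Iic y') ⊆
              ((U 0) ⁻¹' (Iic x) ∩ (U 1) ⁻¹' (Iic y)) ∪ (U 1) ⁻¹' (Ioc y y') := by
            rintro ω ⟨h1, h2⟩
            rcases le_or_gt (U 1 ω) y with h | h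
            · exact Or.inl ⟨h1, h⟩
            · exact Or.inr ⟨h, h2⟩
          have hIoc : (P ((U 1) ⁻¹' (Ioc y y'))).toReal ≤ y' - y := by
            rw [hPU 1 _ measurableSet_Ioc]
            refine le_trans (ENNReal.toReal_mono ENNReal.ofReal_ne_top (unif01_Ioc_le y y')) ?_
            rw [ENNReal.toReal_ofReal (by linarith)]
          calc (P ((U 0) ⁻¹' (Iic x) ∩ (U 1) ⁻¹' (Iic y'))).toReal
              ≤ (P (((U 0) ⁻¹' (Iic x) ∩ (U 1) ⁻¹' (Iic y)) ∪ (U 1) ⁻¹' (Ioc y y'))).toReal :=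
                Prmono hsub
          _ ≤ (P ((U 0) ⁻¹' (Iic x) ∩ (U 1) ⁻¹' (Iic y))).toReal +
                (P ((U 1) ⁻¹' (Ioc y y'))).toReal := Prsub
          _ ≤ (P ((U 0) ⁻¹' (Iic x) ∩ (U 1) ⁻¹' (Iic y))).toReal + (y' - y) := by linarith
      intro x y y'
      rcases le_total y y' with h | h
      · obtain ⟨ha, hb⟩ := base x y y' h
        rw [abs_of_nonpos (by linarith), abs_of_nonpos (by linarith)]
        linarith
      · obtain ⟨ha, hb⟩ := base x y' y h
        rw [abs_of_nonneg (by linarith), abs_of_nonneg (by linarith)]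
        linarith
    have lip : ∀ x x' y y' : ℝ, |C x y - C x' y'| ≤ |x - x'| + |y - y'| := by
      intro x x' y y'
      calc |C x y - C x' y'| = |(C x y - C x' y) + (C x' y - C x' y')| := by ring_nf
      _ ≤ |C x y - C x' y| + |C x' y - C x' y'| := abs_add_le _ _
      _ ≤ |x - x'| + |y - y'| := add_le_add (lipa x x' y) (lipb x' y y')
    -- 1 - w ≤ t for the upper crossing point w
    have hwle : ∀ j (t w : ℝ), 0 < t → t < 1 → δ j < w → w ≤ 1 → V j w = 1 - t →
        1 - w ≤ t := by
      intro j t w h0 h1 hδw hw1 hwV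
      have hw0 : 0 < w := lt_trans (hδ j).1 hδw
      have hsub : (U j) ⁻¹' (Ici w) ∩ G ⊆ (fun ω => V j (U j ω)) ⁻¹' (Ici (1 - t)) := by
        rintro ω ⟨h2, hG⟩
        rw [hGdef] at hG
        have hU1 : U j ω ≤ 1 := by
          fin_cases j
          · exact hG.1.2
          · exact hG.2.2
        exact eW j t w ω hδw hw1 hwV hU1 h2
      calc 1 - w = (P ((U j) ⁻¹' (Ici w))).toReal := (mIci j w hw0.le hw1).symm
      _ = (P ((U j) ⁻¹' (Ici w) ∩ G)).toReal := by rw [hPG]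
      _ ≤ (P ((fun ω => V j (U j ω)) ⁻¹' (Ici (1 - t)))).toReal := Prmono hsub
      _ = t := mA j t h0.le h1.le
    -- the key two-sided estimate
    have key : ∀ p : ℝ, 0 < p → p * b < 1 → p * (1 / b) < 1 →
        Vinv 0 (1 - p * b) ≤ p * (b + 1) → Vinv 1 (1 - p * (1 / b)) ≤ p * (1 / b + 1) →
        C (Vinv 0 (1 - p * b)) (Vinv 1 (1 - p * (1 / b))) ≤ Cs (p * b) (p * (1 / b)) ∧
        Cs (p * b) (p * (1 / b)) ≤ C (Vinv 0 (1 - p * b)) (Vinv 1 (1 - p * (1 / b)))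
          + (p * (b + 1) - C (p * (b + 1)) (1 - p * (1 / b)))
          + (p * (1 / b + 1) - C (1 - p * b) (p * (1 / b + 1)))
          + (1 - (1 - p * b) - (1 - p * (1 / b)) + C (1 - p * b) (1 - p * (1 / b))) := by
      intro p hp hub hvb hX0 hX1
      have hu0 : 0 < p * b := by positivity
      have hv0 : 0 < p * (1 / b) := by positivity
      obtain ⟨w₀, hw₀δ, hw₀1, hw₀V⟩ := hw 0 (p * b) hu0 hub
      obtain ⟨w₁, hw₁δ, hw₁1, hw₁V⟩ := hw 1 (p * (1 / b)) hv0 hvb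
      have hw₀le : 1 - w₀ ≤ p * b := hwle 0 _ w₀ hu0 hub hw₀δ hw₀1 hw₀V
      have hw₁le : 1 - w₁ ≤ p * (1 / b) := hwle 1 _ w₁ hv0 hvb hw₁δ hw₁1 hw₁V
      have hCsEq : Cs (p * b) (p * (1 / b)) =
          (P ((fun ω => V 0 (U 0 ω)) ⁻¹' (Ici (1 - p * b)) ∩
            (fun ω => V 1 (U 1 ω)) ⁻¹' (Ici (1 - p * (1 / b))))).toReal := hCs2 _ _
      have hCa : C (Vinv 0 (1 - p * b)) (Vinv 1 (1 - p * (1 / b))) =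
          (P ((U 0) ⁻¹' (Iic (Vinv 0 (1 - p * b))) ∩
            (U 1) ⁻¹' (Iic (Vinv 1 (1 - p * (1 / b)))))).toReal := hC2 _ _
      constructor
      · rw [hCa, hCsEq,
          ← hPG ((U 0) ⁻¹' (Iic (Vinv 0 (1 - p * b))) ∩
            (U 1) ⁻¹' (Iic (Vinv 1 (1 - p * (1 / b)))))]
        refine Prmono ?_
        rintro ω ⟨⟨h1, h2⟩, hG⟩
        rw [hGdef] at hG
        exact ⟨eL 0 (p * b) ω hu0 hub.le hG.1.1 h1, eL 1 (p * (1 / b)) ω hv0 hvb.le hG.2.1 h2⟩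
      · -- upper bound
        have hsplit : ((fun ω => V 0 (U 0 ω)) ⁻¹' (Ici (1 - p * b)) ∩
            (fun ω => V 1 (U 1 ω)) ⁻¹' (Ici (1 - p * (1 / b)))) ∩ G ⊆
            (((U 0) ⁻¹' (Iic (Vinv 0 (1 - p * b))) ∩ (U 1) ⁻¹' (Iic (Vinv 1 (1 - p * (1 / b))))) ∪
             ((U 0) ⁻¹' (Iic (Vinv 0 (1 - p * b))) ∩ (U 1) ⁻¹' (Ici w₁)) ∪
             ((U 0) ⁻¹' (Ici w₀) ∩ (U 1) ⁻¹' (Iic (Vinv 1 (1 - p * (1 / b)))))) ∪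
             ((U 0) ⁻¹' (Ici w₀) ∩ (U 1) ⁻¹' (Ici w₁)) := by
          rintro ω ⟨⟨hA0, hA1⟩, hG⟩
          rw [hGdef] at hG
          have hA0' : 1 - p * b ≤ V 0 (U 0 ω) := hA0
          have hA1' : 1 - p * (1 / b) ≤ V 1 (U 1 ω) := hA1
          rcases le_or_gt (U 0 ω) (Vinv 0 (1 - p * b)) with h0 | h0 <;>
            rcases le_or_gt (U 1 ω) (Vinv 1 (1 - p * (1 / b))) with h1 | h1
          · exact Or.inl (Or.inl (Or.inl ⟨h0, h1⟩))
          · exact Or.inl (Or.inl (Or.inr ⟨h0,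
              eR 1 (p * (1 / b)) w₁ ω hv0 hvb.le hw₁δ hw₁1 hw₁V hG.2.1 hG.2.2 hA1' h1⟩))
          · exact Or.inl (Or.inr ⟨eR 0 (p * b) w₀ ω hu0 hub.le hw₀δ hw₀1 hw₀V
              hG.1.1 hG.1.2 hA0' h0, h1⟩)
          · exact Or.inr ⟨eR 0 (p * b) w₀ ω hu0 hub.le hw₀δ hw₀1 hw₀V hG.1.1 hG.1.2 hA0' h0,
              eR 1 (p * (1 / b)) w₁ ω hv0 hvb.le hw₁δ hw₁1 hw₁V hG.2.1 hG.2.2 hA1' h1⟩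
        have hb2 : (P ((U 0) ⁻¹' (Iic (Vinv 0 (1 - p * b))) ∩ (U 1) ⁻¹' (Ici w₁))).toReal
            ≤ p * (b + 1) - C (p * (b + 1)) (1 - p * (1 / b)) := by
          refine le_trans (Prmono (Set.inter_subset_inter
            (Set.preimage_mono (Iic_subset_Iic.2 hX0))
            (Set.preimage_mono (Ici_subset_Ici.2 (show (1:ℝ) - p * (1/b) ≤ w₁ by linarith))))) ?_
          exact g1 (p * (b + 1)) (1 - p * (1 / b)) (by positivity)
        have hb3 : (P ((U 0) ⁻¹' (Ici w₀) ∩ (U 1) ⁻¹' (Iic (Vinv 1 (1 - p * (1 / b)))))).toReal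
            ≤ p * (1 / b + 1) - C (1 - p * b) (p * (1 / b + 1)) := by
          refine le_trans (Prmono (Set.inter_subset_inter
            (Set.preimage_mono (Ici_subset_Ici.2 (show (1:ℝ) - p * b ≤ w₀ by linarith)))
            (Set.preimage_mono (Iic_subset_Iic.2 hX1)))) ?_
          exact g2 (1 - p * b) (p * (1 / b + 1)) (by positivity)
        have hb4 : (P ((U 0) ⁻¹' (Ici w₀) ∩ (U 1) ⁻¹' (Ici w₁))).toReal
            ≤ 1 - (1 - p * b) - (1 - p * (1 / b)) + C (1 - p * b) (1 - p * (1 / b)) := by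
          refine le_trans (Prmono (Set.inter_subset_inter
            (Set.preimage_mono (Ici_subset_Ici.2 (show (1:ℝ) - p * b ≤ w₀ by linarith)))
            (Set.preimage_mono (Ici_subset_Ici.2 (show (1:ℝ) - p * (1/b) ≤ w₁ by linarith))))) ?_
          exact g3 (1 - p * b) (1 - p * (1 / b)) (by linarith) (by linarith)
            (by linarith) (by linarith)
        have hchain : Cs (p * b) (p * (1 / b)) ≤
            (P ((U 0) ⁻¹' (Iic (Vinv 0 (1 - p * b))) ∩
              (U 1) ⁻¹' (Iic (Vinv 1 (1 - p * (1 / b)))))).toReal +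
            (P ((U 0) ⁻¹' (Iic (Vinv 0 (1 - p * b))) ∩ (U 1) ⁻¹' (Ici w₁))).toReal +
            (P ((U 0) ⁻¹' (Ici w₀) ∩ (U 1) ⁻¹' (Iic (Vinv 1 (1 - p * (1 / b)))))).toReal +
            (P ((U 0) ⁻¹' (Ici w₀) ∩ (U 1) ⁻¹' (Ici w₁))).toReal := by
          rw [hCsEq, ← hPG ((fun ω => V 0 (U 0 ω)) ⁻¹' (Ici (1 - p * b)) ∩
            (fun ω => V 1 (U 1 ω)) ⁻¹' (Ici (1 - p * (1 / b))))]
          refine le_trans (Prmono hsplit) ?_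
          refine le_trans Prsub (add_le_add (le_trans Prsub (add_le_add
            (le_trans Prsub le_rfl) le_rfl)) le_rfl)
        rw [hCa]
        linarith
    -- limits of the rescaled branch inverses
    have hA0 := hacoef 0 b hb
    have hA1 := hacoef 1 (1 / b) hbinv
    have hβ0 : 0 ≤ α 0 * b := mul_nonneg (hα01 0).1 hb.le
    have hβ1 : 0 ≤ α 1 * (1 / b) := mul_nonneg (hα01 1).1 hbinv.le
    -- main term
    have hmain : Tendsto (fun p => C (Vinv 0 (1 - p * b)) (Vinv 1 (1 - p * (1 / b))) / p)
        (nhdsWithin 0 (Set.Ioi 0)) (nhds (Λ (α 0 * b) (α 1 * (1 / b)))) := by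
      have hg := hΛ (α 0 * b) (α 1 * (1 / b)) hβ0 hβ1
      have hdiff : Tendsto (fun p => C (Vinv 0 (1 - p * b)) (Vinv 1 (1 - p * (1 / b))) / p
          - C (p * (α 0 * b)) (p * (α 1 * (1 / b))) / p)
          (nhdsWithin 0 (Set.Ioi 0)) (nhds 0) := by
        have hB : Tendsto (fun p => |Vinv 0 (1 - p * b) / p - α 0 * b| +
            |Vinv 1 (1 - p * (1 / b)) / p - α 1 * (1 / b)|)
            (nhdsWithin 0 (Set.Ioi 0)) (nhds 0) := by
          have h1 := (hA0.sub_const (α 0 * b)).abs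
          have h2 := (hA1.sub_const (α 1 * (1 / b))).abs
          simpa using h1.add h2
        refine squeeze_zero_norm' ?_ hB
        filter_upwards [self_mem_nhdsWithin] with p (hp : 0 < p)
        have heq : C (Vinv 0 (1 - p * b)) (Vinv 1 (1 - p * (1 / b))) / p
            - C (p * (α 0 * b)) (p * (α 1 * (1 / b))) / p
            = (C (Vinv 0 (1 - p * b)) (Vinv 1 (1 - p * (1 / b)))
              - C (p * (α 0 * b)) (p * (α 1 * (1 / b)))) / p := by ring
        have e0 : Vinv 0 (1 - p * b) / p - α 0 * b = (Vinv 0 (1 - p * b) - p * (α 0 * b)) / p := by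
          rw [sub_div, mul_div_cancel_left₀ _ hp.ne']
        have e1 : Vinv 1 (1 - p * (1 / b)) / p - α 1 * (1 / b)
            = (Vinv 1 (1 - p * (1 / b)) - p * (α 1 * (1 / b))) / p := by
          rw [sub_div, mul_div_cancel_left₀ _ hp.ne']
        rw [Real.norm_eq_abs, heq, e0, e1, abs_div, abs_div, abs_div, abs_of_pos hp, ← add_div]
        exact (div_le_div_iff_of_pos_right hp).2 (lip _ _ _ _)
      have hsum := hg.add hdiff
      rw [add_zero] at hsum
      exact hsum.congr (fun p => by ring)
    -- eventual hypotheses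
    have hev1 : ∀ᶠ p in nhdsWithin (0:ℝ) (Set.Ioi 0), p * b < 1 :=
      ((aux_tendsto_mul b hb).mono_right nhdsWithin_le_nhds).eventually_lt_const one_pos
    have hev2 : ∀ᶠ p in nhdsWithin (0:ℝ) (Set.Ioi 0), p * (1 / b) < 1 :=
      ((aux_tendsto_mul (1 / b) hbinv).mono_right nhdsWithin_le_nhds).eventually_lt_const one_pos
    have hev3 : ∀ᶠ p in nhdsWithin (0:ℝ) (Set.Ioi 0), Vinv 0 (1 - p * b) ≤ p * (b + 1) := by
      have h1 : α 0 * b < b + 1 := by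
        have := (hα01 0).2
        nlinarith
      filter_upwards [hA0.eventually_lt_const h1, self_mem_nhdsWithin] with p h2 (hp : 0 < p)
      have := (div_lt_iff₀ hp).1 h2
      linarith
    have hev4 : ∀ᶠ p in nhdsWithin (0:ℝ) (Set.Ioi 0),
        Vinv 1 (1 - p * (1 / b)) ≤ p * (1 / b + 1) := by
      have h1 : α 1 * (1 / b) < 1 / b + 1 := by
        have := (hα01 1).2
        nlinarith
      filter_upwards [hA1.eventually_lt_const h1, self_mem_nhdsWithin] with p h2 (hp : 0 < p)
      have := (div_lt_iff₀ hp).1 h2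
      linarith
    -- error term
    have herr : Tendsto (fun p => Cs (p * b) (p * (1 / b)) / p
        - C (Vinv 0 (1 - p * b)) (Vinv 1 (1 - p * (1 / b))) / p)
        (nhdsWithin 0 (Set.Ioi 0)) (nhds 0) := by
      have hup := ((hLR (b + 1) (1 / b) (by linarith) hbinv).add
        (hUL b (1 / b + 1) hb (by positivity))).add (hUU b (1 / b) hb hbinv)
      rw [add_zero, add_zero] at hup
      refine tendsto_of_tendsto_of_tendsto_of_le_of_le' tendsto_const_nhds hup ?_ ?_
      · filter_upwards [self_mem_nhdsWithin, hev1, hev2, hev3, hev4]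
          with p hp h1 h2 h3 h4
        have hk := (key p hp h1 h2 h3 h4).1
        exact sub_nonneg.2 ((div_le_div_iff_of_pos_right (show (0:ℝ) < p from hp)).2 hk)
      · filter_upwards [self_mem_nhdsWithin, hev1, hev2, hev3, hev4]
          with p hp h1 h2 h3 h4
        have hk := (key p hp h1 h2 h3 h4).2
        have hp' : (0:ℝ) < p := hp
        have h5 : Cs (p * b) (p * (1 / b)) - C (Vinv 0 (1 - p * b)) (Vinv 1 (1 - p * (1 / b)))
            ≤ (p * (b + 1) - C (p * (b + 1)) (1 - p * (1 / b)))
            + (p * (1 / b + 1) - C (1 - p * b) (p * (1 / b + 1)))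
            + (1 - (1 - p * b) - (1 - p * (1 / b)) + C (1 - p * b) (1 - p * (1 / b))) := by
          linarith
        calc Cs (p * b) (p * (1 / b)) / p
              - C (Vinv 0 (1 - p * b)) (Vinv 1 (1 - p * (1 / b))) / p
            = (Cs (p * b) (p * (1 / b))
              - C (Vinv 0 (1 - p * b)) (Vinv 1 (1 - p * (1 / b)))) / p := by ring
        _ ≤ ((p * (b + 1) - C (p * (b + 1)) (1 - p * (1 / b)))
            + (p * (1 / b + 1) - C (1 - p * b) (p * (1 / b + 1)))
            + (1 - (1 - p * b) - (1 - p * (1 / b)) + C (1 - p * b) (1 - p * (1 / b)))) / p :=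
          (div_le_div_iff_of_pos_right hp').2 h5
        _ = (p * (b + 1) - C (p * (b + 1)) (1 - p * (1 / b))) / p
            + (p * (1 / b + 1) - C (1 - p * b) (p * (1 / b + 1))) / p
            + (1 - (1 - p * b) - (1 - p * (1 / b)) + C (1 - p * b) (1 - p * (1 / b))) / p := by
          ring
    have hfin := hmain.add herr
    rw [add_zero] at hfin
    exact hfin.congr (fun p => by ring)
  · intro h0 h1
    set A := Real.sqrt (α 0) with hAdef
    set B := Real.sqrt (α 1) with hBdef
    have hA : 0 < A := Real.sqrt_pos.2 h0
    have hB : 0 < B := Real.sqrt_pos.2 h1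
    have hA2 : A ^ 2 = α 0 := Real.sq_sqrt h0.le
    have hB2 : B ^ 2 = α 1 := Real.sq_sqrt h1.le
    have hsd : Real.sqrt (α 1 / α 0) = B / A := Real.sqrt_div h1.le _
    have hcm : Real.sqrt (α 0 * α 1) = A * B := Real.sqrt_mul h0.le _
    have hAB : 0 < A * B := mul_pos hA hB
    have e1 : α 0 * (Real.sqrt (α 1 / α 0) * bstar) = (A * B) * bstar := by
      rw [hsd, ← hA2]; field_simp
    have e2 : α 1 * (1 / (Real.sqrt (α 1 / α 0) * bstar)) = (A * B) * (1 / bstar) := by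
      rw [hsd, ← hB2]; field_simp
    have eval : Λ (α 0 * (Real.sqrt (α 1 / α 0) * bstar))
        (α 1 * (1 / (Real.sqrt (α 1 / α 0) * bstar)))
        = Real.sqrt (α 0 * α 1) * Λ bstar (1 / bstar) := by
      rw [e1, e2, hcm]
      exact aux_hom hΛ hAB hbstar.le (by positivity)
    refine ⟨fun b hb => ?_, eval⟩
    rw [eval]
    set b' := b * A / B with hb'def
    have hb' : 0 < b' := by positivity
    have e3 : α 0 * b = (A * B) * b' := by rw [hb'def, ← hA2]; field_simp
    have e4 : α 1 * (1 / b) = (A * B) * (1 / b') := by rw [hb'def, ← hB2]; field_simp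
    rw [e3, e4, aux_hom hΛ hAB hb'.le (by positivity), hcm]
    exact mul_le_mul_of_nonneg_left (hmax b' hb') hAB.le
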